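/- For non-negative integers d, f and positive integer n, the sum over i from 1 to n of (i-1)^{\underline{d}} · i^{\overline{f}} equals (1/(f+d+1)) · (n-1)^{\underline{d}} · n^{\overline{f+1}}, where x^{\underline{k}} denotes the falling factorial and x^{\overline{k}} denotes the rising factorial. -/

import Mathlib

open Finset

/-- Rising factorial `x^{\overline{k}} = x(x+1)⋯(x+k-1)`. -/
noncomputable def risingFac (x : ℝ) (k : ℕ) : ℝ := ∏ j ∈ Finset.range k, (x + j)

/-- Falling factorial `x^{\underline{k}} = x(x-1)⋯(x-k+1)`. -/
noncomputable def fallingFac (x : ℝ) (k : ℕ) : ℝ := ∏ j ∈ Finset.range k, (x - j)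

lemma rising_succ (x : ℝ) (k : ℕ) : risingFac x (k+1) = risingFac x k * (x + k) := by
  simp [risingFac, Finset.prod_range_succ]

lemma rising_succ' (x : ℝ) (k : ℕ) : risingFac x (k+1) = x * risingFac (x+1) k := by
  rw [risingFac, Finset.prod_range_succ']
  simp only [Nat.cast_add, Nat.cast_one, Nat.cast_zero, add_zero]
  rw [mul_comm, risingFac]
  congr 1
  apply Finset.prod_congr rfl
  intro j _
  ring

lemma falling_shift (x : ℝ) (k : ℕ) : x * fallingFac (x-1) k = fallingFac x k * (x - k) := by
  have h1 : fallingFac x (k+1) = fallingFac x k * (x - k) := by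
    simp [fallingFac, Finset.prod_range_succ]
  have h2 : fallingFac x (k+1) = x * fallingFac (x-1) k := by
    rw [fallingFac, Finset.prod_range_succ']
    simp only [Nat.cast_zero, sub_zero]
    rw [mul_comm, fallingFac]
    congr 1
    apply Finset.prod_congr rfl
    intro j _
    push_cast
    ring
  rw [← h2, h1]

lemma falling_zero (k : ℕ) (hk : 0 < k) : fallingFac 0 k = 0 := by
  apply Finset.prod_eq_zero (Finset.mem_range.mpr hk)
  simp

theorem stmt_0 (d f n : ℕ) (hn : 0 < n) :
    ∑ i ∈ Finset.Icc 1 n, fallingFac ((i : ℝ) - 1) d * risingFac (i : ℝ) f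
      = (1 / ((f : ℝ) + d + 1)) * fallingFac ((n : ℝ) - 1) d * risingFac (n : ℝ) (f + 1) := by
  have hK : ((f : ℝ) + d + 1) ≠ 0 := by positivity
  induction n with
  | zero => omega
  | succ m ih =>
    rcases Nat.eq_zero_or_pos m with hm | hm
    · subst hm
      norm_num [show Finset.Icc 1 1 = {1} from rfl]
      rcases Nat.eq_zero_or_pos d with hd | hd
      · subst hd
        rw [show fallingFac 0 0 = 1 by simp [fallingFac], rising_succ]
        push_cast
        rw [inv_mul_eq_div, div_mul_eq_mul_div, eq_div_iff (by positivity)]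
        ring
      · rw [falling_zero d hd]
        ring
    · have key := ih hm
      rw [Finset.sum_Icc_succ_top (by omega : 1 ≤ m + 1), key]
      push_cast
      rw [show ((m:ℝ) + 1 - 1) = (m:ℝ) by ring]
      rw [rising_succ (x := (m:ℝ)+1) (k := f), rising_succ' (x := (m:ℝ)) (k := f)]
      rw [show (m:ℝ) + 1 = (m:ℝ) + 1 from rfl]
      have hF := falling_shift ((m:ℝ)) d
      field_simp
      linear_combination risingFac ((m:ℝ)+1) f * hF
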